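/- Let X_{l,m} take value n with probability h_{l,m}(n) / sum_{i=0}^{lm} h_{l,m}(i). Then for 0 ≤ n ≤ lm, P[X_{l,m} = n] = (1/((l+1)^m - 1)) · (l/(l+1)) · sum_{j=i}^{m} C(j,n)_{l+1}, where i is the smallest index in {1,...,m} with n ≤ i·l. -/

import Mathlib

/-- The polynomial coefficient `C(j,n)_{l+1}`: the coefficient of `x^n` in
`(1 + x + x^2 + ⋯ + x^l)^j`. -/
noncomputable def polyCoeff (l j n : ℕ) : ℕ :=
  ((∑ i ∈ Finset.range (l + 1), (Polynomial.X : Polynomial ℕ) ^ i) ^ j).coeff n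

/-- `cComp l n j` is the number of `j`-tuples of integers in `{0,…,l}` summing to `n`. -/
noncomputable def cComp (l n j : ℕ) : ℕ :=
  Nat.card {f : Fin j → ℕ // (∀ i, f i ≤ l) ∧ ∑ i, f i = n}

/-- `hRect l m n`: the number of compositions of `n` with at most `m` parts (at least one),
each part in `{0,…,l}`. -/
noncomputable def hRect (l m n : ℕ) : ℕ := ∑ j ∈ Finset.Icc 1 m, cComp l n j

lemma polyCoeff_eq_card (l j n : ℕ) :
    polyCoeff l j n =
      ((Fintype.piFinset fun _ : Fin j => Finset.range (l + 1)).filter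
        fun f => ∑ i, f i = n).card := by
  have h : (∑ i ∈ Finset.range (l + 1), (Polynomial.X : Polynomial ℕ) ^ i) ^ j
      = ∑ f ∈ Fintype.piFinset (fun _ : Fin j => Finset.range (l + 1)),
          (Polynomial.X : Polynomial ℕ) ^ (∑ i, f i) := by
    rw [← Fin.prod_const, Finset.prod_univ_sum]
    refine Finset.sum_congr rfl fun f _ => ?_
    exact Finset.prod_pow_eq_pow_sum Finset.univ f Polynomial.X
  rw [polyCoeff, h, Polynomial.finset_sum_coeff, Finset.card_filter]
  refine Finset.sum_congr rfl fun f _ => ?_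
  rw [Polynomial.coeff_X_pow]
  simp [eq_comm]

lemma cComp_eq_card (l n j : ℕ) :
    cComp l n j =
      ((Fintype.piFinset fun _ : Fin j => Finset.range (l + 1)).filter
        fun f => ∑ i, f i = n).card := by
  rw [cComp, ← Nat.card_eq_finsetCard]
  refine Nat.card_congr (Equiv.subtypeEquivRight fun f => ?_)
  simp [Fintype.mem_piFinset, Nat.lt_succ_iff]

lemma cComp_eq_polyCoeff (l n j : ℕ) : cComp l n j = polyCoeff l j n := by
  rw [cComp_eq_card, polyCoeff_eq_card]

lemma sum_f_le (l j : ℕ) (f : Fin j → ℕ)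
    (hf : f ∈ Fintype.piFinset fun _ : Fin j => Finset.range (l + 1)) :
    ∑ i, f i ≤ j * l := by
  calc ∑ i, f i ≤ ∑ _i : Fin j, l := by
        refine Finset.sum_le_sum fun i _ => ?_
        have := Finset.mem_range.mp ((Fintype.mem_piFinset.mp hf) i)
        omega
    _ = j * l := by simp [Finset.sum_const, Finset.card_univ, mul_comm]

lemma polyCoeff_eq_zero (l j n : ℕ) (h : j * l < n) : polyCoeff l j n = 0 := by
  rw [polyCoeff_eq_card, Finset.card_eq_zero, Finset.filter_eq_empty_iff]
  intro f hf
  have := sum_f_le l j f hf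
  omega

lemma sum_polyCoeff (l j N : ℕ) (h : j * l ≤ N) :
    ∑ n ∈ Finset.range (N + 1), polyCoeff l j n = (l + 1) ^ j := by
  simp only [polyCoeff_eq_card]
  rw [← Finset.card_eq_sum_card_fiberwise
      (fun f hf => Finset.mem_range.mpr (by have := sum_f_le l j f hf; omega))]
  simp [Fintype.card_piFinset]

/-- `P[X_{l,m} = n] = (1/((l+1)^m - 1)) · (l/(l+1)) · ∑_{j=i}^m C(j,n)_{l+1}`, where
`X_{l,m} = n` with probability `hRect l m n / ∑_i hRect l m i` and `i` is the smallest
index in `{1,…,m}` with `n ≤ i·l`. -/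
theorem prob_X_eq (l m n i : ℕ) (hl : 1 ≤ l) (hm : 1 ≤ m) (hn : n ≤ l * m)
    (hi1 : 1 ≤ i) (him : i ≤ m) (hile : n ≤ i * l)
    (hmin : ∀ j, 1 ≤ j → n ≤ j * l → i ≤ j) :
    (hRect l m n : ℚ) / ∑ i ∈ Finset.range (l * m + 1), (hRect l m i : ℚ) =
      (1 / ((l + 1) ^ m - 1)) * ((l : ℚ) / (l + 1)) *
        ∑ j ∈ Finset.Icc i m, (polyCoeff l j n : ℚ) := by
  have hnum : hRect l m n = ∑ j ∈ Finset.Icc i m, polyCoeff l j n := by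
    rw [hRect]
    calc ∑ j ∈ Finset.Icc 1 m, cComp l n j
        = ∑ j ∈ Finset.Icc 1 m, polyCoeff l j n :=
          Finset.sum_congr rfl fun j _ => cComp_eq_polyCoeff l n j
      _ = ∑ j ∈ Finset.Icc i m, polyCoeff l j n := by
          refine (Finset.sum_subset (Finset.Icc_subset_Icc hi1 le_rfl) ?_).symm
          intro j hj hj'
          simp only [Finset.mem_Icc] at hj hj'
          refine polyCoeff_eq_zero l j n ?_
          by_contra hc
          push_neg at hc
          exact absurd (hmin j hj.1 hc) (by omega)
  have hden : ∑ k ∈ Finset.range (l * m + 1), hRect l m k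
      = ∑ j ∈ Finset.Icc 1 m, (l + 1) ^ j := by
    simp only [hRect]
    rw [Finset.sum_comm]
    refine Finset.sum_congr rfl fun j hj => ?_
    simp only [Finset.mem_Icc] at hj
    calc ∑ k ∈ Finset.range (l * m + 1), cComp l k j
        = ∑ k ∈ Finset.range (l * m + 1), polyCoeff l j k :=
          Finset.sum_congr rfl fun k _ => cComp_eq_polyCoeff l k j
      _ = (l + 1) ^ j := sum_polyCoeff l j (l * m)
          (by calc j * l ≤ m * l := Nat.mul_le_mul_right l hj.2
                _ = l * m := Nat.mul_comm m l)
  have hl0 : (l : ℚ) ≠ 0 := by positivity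
  have hx0 : ((l : ℚ) + 1) ≠ 0 := by positivity
  have hx1 : (1 : ℚ) < (l : ℚ) + 1 := by
    have : (1 : ℚ) ≤ (l : ℚ) := by exact_mod_cast hl
    linarith
  have hxm : ((l : ℚ) + 1) ^ m - 1 ≠ 0 := by
    have : (1 : ℚ) < ((l : ℚ) + 1) ^ m := one_lt_pow₀ hx1 (by omega)
    linarith
  have hDval : (∑ k ∈ Finset.range (l * m + 1), (hRect l m k : ℚ))
      = (((l : ℚ) + 1) ^ m - 1) * ((l : ℚ) + 1) / l := by
    rw [← Nat.cast_sum, hden]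
    push_cast
    have h1 : ∑ j ∈ Finset.Icc 1 m, ((l : ℚ) + 1) ^ j
        = ((l : ℚ) + 1) * ∑ k ∈ Finset.range m, ((l : ℚ) + 1) ^ k := by
      rw [← Finset.Ico_add_one_right_eq_Icc, Finset.sum_Ico_eq_sum_range]
      simp only [Nat.succ_sub_one, Nat.add_sub_cancel, pow_add, pow_one, ← Finset.mul_sum]
    rw [h1, eq_div_iff hl0]
    have hg := geom_sum_mul ((l : ℚ) + 1) m
    linear_combination ((l : ℚ) + 1) * hg
  rw [hnum, hDval]
  push_cast
  field_simp
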